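/- arXiv:math/0611251 — 2 statements merged into one kernel-verified Lean document; each statement's English description precedes it below -/
import Mathlib

section
/- Let G be a second countable locally compact Hausdorff principal groupoid with left Haar system, and z ∈ G⁰. If for every k ≥ 1 the constant sequence {z, z, ...} converges k-times in G⁰/G to z, then for every open neighborhood V of z in G⁰, λ_z(r⁻¹(V)) = ∞. -/
open MeasureTheory Filter Topology ENNReal Classical

/-- A topological groupoid, given by range/source maps, a (total) partial-multiplication
`mul` (only meaningful on composable pairs, i.e. when `s γ = r α`) and inversion. -/
structure TopGroupoid (G : Type*) [TopologicalSpace G] where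
  r : G → G
  s : G → G
  mul : G → G → G
  inv : G → G
  r_mul : ∀ γ α, s γ = r α → r (mul γ α) = r γ
  s_mul : ∀ γ α, s γ = r α → s (mul γ α) = s α
  mul_assoc' : ∀ γ α β, s γ = r α → s α = r β → mul (mul γ α) β = mul γ (mul α β)
  r_inv : ∀ γ, r (inv γ) = s γ
  s_inv : ∀ γ, s (inv γ) = r γ
  inv_inv' : ∀ γ, inv (inv γ) = γ
  mul_inv' : ∀ γ, mul γ (inv γ) = r γ
  inv_mul' : ∀ γ, mul (inv γ) γ = s γ
  unit_mul : ∀ γ, mul (r γ) γ = γ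
  mul_unit : ∀ γ, mul γ (s γ) = γ
  continuous_r : Continuous r
  continuous_s : Continuous s
  continuous_inv : Continuous inv
  continuous_mul : ContinuousOn (fun p : G × G => mul p.1 p.2) {p | s p.1 = r p.2}

namespace TopGroupoid

variable {G : Type*} [TopologicalSpace G] (Gd : TopGroupoid G)

/-- The unit space `G⁰` of the groupoid. -/
def units : Set G := Set.range Gd.r

/-- The orbit `[z] = r(s⁻¹{z})` of a unit `z`. -/
def orbit (z : G) : Set G := Gd.r '' (Gd.s ⁻¹' {z})

/-- A groupoid is principal if `γ ↦ (r γ, s γ)` is injective. -/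
def Principal : Prop := Function.Injective (fun γ => (Gd.r γ, Gd.s γ))

/-- Product of two subsets of the groupoid: all products of composable pairs. -/
def setMul (A B : Set G) : Set G :=
  {x | ∃ γ ∈ A, ∃ α ∈ B, Gd.s γ = Gd.r α ∧ x = Gd.mul γ α}

/-- Powers of a subset with respect to `setMul`; `A ^ 1 = A`. -/
def setPow (A : Set G) : ℕ → Set G
  | 0 => Gd.units
  | n+1 => Gd.setMul A (setPow A n)

/-- A set `W ⊆ G` is conditionally compact if `WV` and `VW` are relatively compact
for every compact `V ⊆ G`. -/
def CondCompact (W : Set G) : Prop :=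
  ∀ V : Set G, IsCompact V →
    IsCompact (closure (Gd.setMul W V)) ∧ IsCompact (closure (Gd.setMul V W))

/-- A sequence `x : ℕ → G` (in the unit space) converges `k`-times in `G⁰/G` to `z`. -/
def ConvergesKTimes (x : ℕ → G) (z : G) (k : ℕ) : Prop :=
  ∃ γ : Fin k → ℕ → G,
    (∀ i n, Gd.s (γ i n) = x n) ∧
    (∀ i, Tendsto (fun n => Gd.r (γ i n)) atTop (𝓝 z)) ∧
    (∀ i j : Fin k, i < j →
      Tendsto (fun n => Gd.mul (γ j n) (Gd.inv (γ i n))) atTop (cocompact G))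

end TopGroupoid

/-- A left Haar system on a topological groupoid: a family of Radon measures `λˣ`
with support `r⁻¹{x}`, continuous in `x`, and left invariant. -/
structure HaarSystem {G : Type*} [TopologicalSpace G] [MeasurableSpace G]
    (Gd : TopGroupoid G) where
  lam : G → Measure G
  regular : ∀ x, (lam x).Regular
  supp_subset : ∀ x ∈ Gd.units, lam x {γ | Gd.r γ ≠ x} = 0
  supp_full : ∀ x ∈ Gd.units, ∀ U : Set G, IsOpen U →
      (U ∩ Gd.r ⁻¹' {x}).Nonempty → 0 < lam x U
  continuous_int : ∀ f : G → ℝ, Continuous f → HasCompactSupport f →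
      Continuous fun x => ∫ γ, f γ ∂(lam x)
  left_invariant : ∀ γ : G, ∀ f : G → ℝ, Continuous f → HasCompactSupport f →
      ∫ α, f (Gd.mul γ α) ∂(lam (Gd.s γ)) = ∫ α, f α ∂(lam (Gd.r γ))

namespace HaarSystem

variable {G : Type*} [TopologicalSpace G] [MeasurableSpace G]
  {Gd : TopGroupoid G} (HS : HaarSystem Gd)

/-- The associated right Haar system `λ_x(E) = λˣ(E⁻¹)`, supported on `s⁻¹{x}`. -/
noncomputable def rlam (x : G) : Measure G := (HS.lam x).map Gd.inv

/-- The groupoid (with its Haar system) is integrable if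
`sup_{x ∈ N} λˣ(s⁻¹ N) < ∞` for every compact `N ⊆ G⁰`. -/
def Integrable : Prop :=
  ∀ N : Set G, N ⊆ Gd.units → IsCompact N →
    (⨆ x ∈ N, HS.lam x (Gd.s ⁻¹' N)) < ⊤

/-- `G` fails to be integrable at `z` if `sup_{x ∈ U} λˣ(s⁻¹ U) = ∞` for every open
neighborhood `U` of `z` in `G⁰`. -/
def FailsIntegrableAt (z : G) : Prop :=
  ∀ U : Set G, IsOpen U → z ∈ U →
    (⨆ x ∈ U ∩ Gd.units, HS.lam x (Gd.s ⁻¹' (U ∩ Gd.units))) = ⊤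

end HaarSystem

namespace TopGroupoid

variable {G : Type*} [TopologicalSpace G] (Gd : TopGroupoid G)

lemma r_r (γ : G) : Gd.r (Gd.r γ) = Gd.r γ := by
  have h := Gd.r_mul γ (Gd.inv γ) (Gd.r_inv γ).symm
  rwa [Gd.mul_inv'] at h

lemma s_r (γ : G) : Gd.s (Gd.r γ) = Gd.r γ := by
  have h := Gd.s_mul γ (Gd.inv γ) (Gd.r_inv γ).symm
  rwa [Gd.mul_inv', Gd.s_inv] at h

lemma mem_units_iff {x : G} : x ∈ Gd.units ↔ Gd.r x = x := by
  constructor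
  · rintro ⟨γ, rfl⟩; exact Gd.r_r γ
  · intro h; exact ⟨x, h⟩

lemma isClosed_units [T2Space G] : IsClosed Gd.units := by
  have : Gd.units = {x | Gd.r x = x} := Set.ext fun x => Gd.mem_units_iff
  rw [this]; exact isClosed_eq Gd.continuous_r continuous_id

lemma inv_eq_of_mul {p q : G} (h : Gd.s p = Gd.r q) (hm : Gd.mul p q = Gd.r p) :
    q = Gd.inv p := by
  have h1 : Gd.mul (Gd.mul (Gd.inv p) p) q = Gd.mul (Gd.inv p) (Gd.mul p q) :=
    Gd.mul_assoc' (Gd.inv p) p q (Gd.s_inv p) h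
  rw [hm, Gd.inv_mul'] at h1
  rw [← Gd.s_inv p, Gd.mul_unit] at h1
  have h2 : Gd.mul (Gd.s p) q = q := by rw [h]; exact Gd.unit_mul q
  rw [h2] at h1; exact h1

lemma inv_mul_rev {γ α : G} (h : Gd.s γ = Gd.r α) :
    Gd.inv (Gd.mul γ α) = Gd.mul (Gd.inv α) (Gd.inv γ) := by
  have hii : Gd.s (Gd.inv α) = Gd.r (Gd.inv γ) := by
    rw [Gd.s_inv, Gd.r_inv]; exact h.symm
  have hαi : Gd.s α = Gd.r (Gd.inv α) := (Gd.r_inv α).symm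
  have hc : Gd.s α = Gd.r (Gd.mul (Gd.inv α) (Gd.inv γ)) := by
    rw [Gd.r_mul _ _ hii, Gd.r_inv]
  have hs : Gd.s (Gd.mul γ α) = Gd.r (Gd.mul (Gd.inv α) (Gd.inv γ)) := by
    rw [Gd.s_mul γ α h]; exact hc
  have hm : Gd.mul (Gd.mul γ α) (Gd.mul (Gd.inv α) (Gd.inv γ)) = Gd.r (Gd.mul γ α) := by
    rw [Gd.mul_assoc' γ α _ h hc,
      ← Gd.mul_assoc' α (Gd.inv α) (Gd.inv γ) hαi hii, Gd.mul_inv' α]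
    have hra : Gd.r α = Gd.r (Gd.inv γ) := by rw [Gd.r_inv]; exact h.symm
    rw [hra, Gd.unit_mul, Gd.mul_inv' γ, Gd.r_mul γ α h]
  exact (Gd.inv_eq_of_mul hs hm).symm

end TopGroupoid

/-- if the constant sequence `{z,z,...}` converges `k`-times in `G⁰/G` to `z`
for every `k ≥ 1`, then `λ_z(r⁻¹ V) = ∞` for every open neighborhood `V` of `z` in `G⁰`. -/
theorem stmt7 {G : Type*} [TopologicalSpace G] [T2Space G] [LocallyCompactSpace G]
    [SecondCountableTopology G] [MeasurableSpace G] [BorelSpace G]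
    (Gd : TopGroupoid G) (HS : HaarSystem Gd) (hpr : Gd.Principal)
    (z : G) (hz : z ∈ Gd.units)
    (hconv : ∀ k : ℕ, 1 ≤ k → Gd.ConvergesKTimes (fun _ => z) z k) :
    ∀ V : Set G, IsOpen V → z ∈ V →
      HS.rlam z (Gd.r ⁻¹' (V ∩ Gd.units)) = ⊤ := by
  intro V hV hzV
  classical
  haveI := HS.regular z
  set W : Set G := V ∩ Gd.units with hWdef
  have hrz : Gd.r z = z := (Gd.mem_units_iff).mp hz
  have hsz : Gd.s z = z := by obtain ⟨γ, rfl⟩ := hz; exact Gd.s_r γ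
  have hWmeas : MeasurableSet W :=
    hV.measurableSet.inter Gd.isClosed_units.measurableSet
  have hmap : HS.rlam z (Gd.r ⁻¹' W) = HS.lam z (Gd.s ⁻¹' W) := by
    rw [HaarSystem.rlam, Measure.map_apply Gd.continuous_inv.measurable
      (Gd.continuous_r.measurable hWmeas)]
    congr 1
    ext γ
    simp [Gd.r_inv]
  rw [hmap]
  set T : Set G := Gd.s ⁻¹' W with hTdef
  -- choose a compact neighborhood inside s⁻¹ V
  have hUopen : IsOpen (Gd.s ⁻¹' V) := hV.preimage Gd.continuous_s
  have hzU : z ∈ Gd.s ⁻¹' V := by show Gd.s z ∈ V; rw [hsz]; exact hzV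
  obtain ⟨K, hKcomp, hzK, hKU⟩ := exists_compact_subset hUopen hzU
  -- Urysohn function
  obtain ⟨f, hf1, hf0, hfc, hf01⟩ :=
    exists_continuous_one_zero_of_isCompact (isCompact_singleton : IsCompact {z})
      (isOpen_interior.isClosed_compl)
      (Set.disjoint_singleton_left.mpr (fun hh => hh hzK))
  have hFK : tsupport ⇑f ⊆ K := by
    refine closure_minimal ?_ hKcomp.isClosed
    intro x hx
    by_contra hxK
    exact interior_subset (by_contra fun h => hx (hf0 h)) |> hxK ∘ fun h => h
  have hFcomp : IsCompact (tsupport ⇑f) := hfc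
  -- c = ∫ f dλ^z > 0
  set c : ℝ := ∫ γ, f γ ∂ HS.lam z with hcdef
  have hIntf : Integrable (⇑f) (HS.lam z) :=
    f.continuous.integrable_of_hasCompactSupport hfc
  have hc : 0 < c := by
    rw [hcdef, integral_pos_iff_support_of_nonneg (fun x => (hf01 x).1) hIntf]
    have hsupp_open : IsOpen (Function.support ⇑f) := by
      have hse : Function.support ⇑f = ⇑f ⁻¹' {(0 : ℝ)}ᶜ := by
        ext x; simp [Function.mem_support]
      rw [hse]; exact isOpen_compl_singleton.preimage f.continuous
    exact HS.supp_full z hz _ hsupp_open ⟨z, by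
      simp only [Set.mem_inter_iff, Function.mem_support, Set.mem_preimage,
        Set.mem_singleton_iff]
      exact ⟨by rw [hf1 rfl]; norm_num, hrz⟩⟩
  -- main estimate: λ^z T ≥ k · (c/2) for every k
  suffices hmain : ∀ k : ℕ, (k : ℝ≥0∞) * ENNReal.ofReal (c / 2) ≤ HS.lam z T by
    by_contra hne
    obtain ⟨m, hm⟩ := ENNReal.exists_nat_gt hne
    set k := ⌈(m : ℝ) / (c / 2)⌉₊ with hkdef
    have hc2 : (0 : ℝ) < c / 2 := by linarith
    have h1 : (m : ℝ) ≤ (k : ℝ) * (c / 2) := by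
      have hle := Nat.le_ceil ((m : ℝ) / (c / 2))
      calc (m : ℝ) = ((m : ℝ) / (c / 2)) * (c / 2) := by field_simp
        _ ≤ (k : ℝ) * (c / 2) := mul_le_mul_of_nonneg_right hle hc2.le
    have h2 : (m : ℝ≥0∞) ≤ (k : ℝ≥0∞) * ENNReal.ofReal (c / 2) := by
      calc (m : ℝ≥0∞) = ENNReal.ofReal (m : ℝ) := by simp
        _ ≤ ENNReal.ofReal ((k : ℝ) * (c / 2)) := ENNReal.ofReal_le_ofReal h1
        _ = ENNReal.ofReal (k : ℝ) * ENNReal.ofReal (c / 2) :=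
            ENNReal.ofReal_mul (by positivity)
        _ = (k : ℝ≥0∞) * ENNReal.ofReal (c / 2) := by rw [ENNReal.ofReal_natCast]
    exact absurd (h2.trans (hmain k)) (not_le.2 hm)
  intro k
  rcases Nat.eq_zero_or_pos k with hk0 | hk1
  · simp [hk0]
  obtain ⟨γs, hγs, hγr, hγesc⟩ := hconv k hk1
  -- the compact set C = F · F⁻¹
  set D : Set (G × G) :=
    {p : G × G | Gd.s p.1 = Gd.r p.2} ∩ (tsupport ⇑f) ×ˢ (Gd.inv '' tsupport ⇑f)
    with hDdef
  have hDcomp : IsCompact D :=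
    ((hFcomp.prod (hFcomp.image Gd.continuous_inv)).inter_left
      (isClosed_eq (Gd.continuous_s.comp continuous_fst)
        (Gd.continuous_r.comp continuous_snd)))
  set C : Set G := (fun p : G × G => Gd.mul p.1 p.2) '' D with hCdef
  have hCcomp : IsCompact C :=
    hDcomp.image_of_continuousOn (Gd.continuous_mul.mono Set.inter_subset_left)
  -- eventual conditions
  have hev1 : ∀ i : Fin k, ∀ᶠ n in atTop,
      c / 2 ≤ ∫ γ, f γ ∂ HS.lam (Gd.r (γs i n)) := by
    intro i
    have htd : Tendsto (fun n => ∫ γ, f γ ∂ HS.lam (Gd.r (γs i n))) atTop (𝓝 c) :=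
      ((HS.continuous_int ⇑f f.continuous hfc).tendsto z).comp (hγr i)
    exact htd.eventually_const_le (by linarith)
  have hev2 : ∀ i j : Fin k, i < j → ∀ᶠ n in atTop,
      Gd.mul (γs j n) (Gd.inv (γs i n)) ∉ C := by
    intro i j hij
    have := hγesc i j hij
    exact this.eventually hCcomp.compl_mem_cocompact
  have hev : ∀ᶠ n in atTop,
      (∀ i : Fin k, c / 2 ≤ ∫ γ, f γ ∂ HS.lam (Gd.r (γs i n))) ∧
      (∀ i j : Fin k, i < j → Gd.mul (γs j n) (Gd.inv (γs i n)) ∉ C) := by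
    refine (eventually_all.2 hev1).and ?_
    refine eventually_all.2 fun i => eventually_all.2 fun j => ?_
    by_cases hij : i < j
    · exact (hev2 i j hij).mono fun n h _ => h
    · exact Filter.Eventually.of_forall fun n h => absurd h hij
  obtain ⟨n, hn1, hn2⟩ := hev.exists
  have hβs : ∀ i : Fin k, Gd.s (γs i n) = z := fun i => hγs i n
  -- the translated sets
  set A : Fin k → Set G := fun i =>
    {α | Gd.r α = z} ∩ (fun α => Gd.mul (γs i n) α) ⁻¹' (tsupport ⇑f) with hAdef
  have hAclosed : ∀ i, IsClosed (A i) := by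
    intro i
    have hZ : IsClosed {α | Gd.r α = z} := isClosed_eq Gd.continuous_r continuous_const
    have hcont : ContinuousOn (fun α => Gd.mul (γs i n) α) {α | Gd.r α = z} := by
      have hmaps : Set.MapsTo (fun α => ((γs i n), α)) {α | Gd.r α = z}
          {p : G × G | Gd.s p.1 = Gd.r p.2} := by
        intro α hα
        simp only [Set.mem_setOf_eq] at hα ⊢
        rw [hβs i, hα]
      exact Gd.continuous_mul.comp
        ((continuous_const.prodMk continuous_id).continuousOn) hmaps
    exact hcont.preimage_isClosed_of_isClosed hZ (isClosed_tsupport _)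
  have hAT : ∀ i, A i ⊆ T := by
    rintro i α ⟨hαz, hαF⟩
    have hcomp : Gd.s (γs i n) = Gd.r α := by rw [hβs i, hαz]
    have hsα : Gd.s α = Gd.s (Gd.mul (γs i n) α) := (Gd.s_mul _ _ hcomp).symm
    show Gd.s α ∈ V ∩ Gd.units
    refine ⟨?_, ⟨Gd.inv α, Gd.r_inv α⟩⟩
    rw [hsα]
    exact hKU (hFK hαF)
  -- lower bound for each piece
  have hA_lb : ∀ i, ENNReal.ofReal (c / 2) ≤ HS.lam z (A i) := by
    intro i
    by_cases htop : HS.lam z (A i) = ⊤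
    · rw [htop]; exact le_top
    have hinv := HS.left_invariant (γs i n) ⇑f f.continuous hfc
    rw [hβs i] at hinv
    have hge : c / 2 ≤ ∫ α, f (Gd.mul (γs i n) α) ∂ HS.lam z := by
      rw [hinv]; exact hn1 i
    have hIf : Integrable (fun α => f (Gd.mul (γs i n) α)) (HS.lam z) := by
      by_contra hni
      rw [integral_undef hni] at hge
      linarith
    have hIg : Integrable ((A i).indicator (1 : G → ℝ)) (HS.lam z) := by
      rw [integrable_indicator_iff (hAclosed i).measurableSet]
      exact integrableOn_const htop (by simp)
    have hae : (fun α => f (Gd.mul (γs i n) α)) ≤ᵐ[HS.lam z] (A i).indicator 1 := by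
      have hnull : HS.lam z {γ | Gd.r γ ≠ z} = 0 := HS.supp_subset z hz
      rw [Filter.EventuallyLE, ae_iff]
      refine measure_mono_null (fun α hα => ?_) hnull
      simp only [Set.mem_setOf_eq, not_le] at hα ⊢
      intro hrα
      apply absurd hα
      apply not_lt.2
      by_cases hmem : Gd.mul (γs i n) α ∈ tsupport ⇑f
      · have hAm : α ∈ A i := ⟨hrα, hmem⟩
        rw [Set.indicator_of_mem hAm]
        exact (hf01 _).2
      · rw [image_eq_zero_of_notMem_tsupport hmem]
        exact Set.indicator_nonneg (fun _ _ => zero_le_one) α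
    have hle := integral_mono_ae hIf hIg hae
    rw [integral_indicator_one (hAclosed i).measurableSet] at hle
    rw [ENNReal.ofReal_le_iff_le_toReal htop]
    rw [measureReal_def] at hle
    linarith
  -- disjointness
  have hkey : ∀ i j : Fin k, i < j → ∀ α, α ∈ A i → α ∈ A j → False := by
    rintro i j hij α ⟨hαz, hFi⟩ ⟨-, hFj⟩
    have hcompi : Gd.s (γs i n) = Gd.r α := by rw [hβs i, hαz]
    have hcompj : Gd.s (γs j n) = Gd.r α := by rw [hβs j, hαz]
    have hc1 : Gd.s (Gd.mul (γs j n) α) = Gd.r (Gd.inv α) := by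
      rw [Gd.s_mul _ _ hcompj, Gd.r_inv]
    have hc2 : Gd.s (Gd.inv α) = Gd.r (Gd.inv (γs i n)) := by
      rw [Gd.s_inv, Gd.r_inv, ← hcompi]
    have hc3 : Gd.s α = Gd.r (Gd.inv α) := (Gd.r_inv α).symm
    have hid : Gd.mul (γs j n) (Gd.inv (γs i n)) =
        Gd.mul (Gd.mul (γs j n) α) (Gd.inv (Gd.mul (γs i n) α)) := by
      rw [Gd.inv_mul_rev hcompi,
        ← Gd.mul_assoc' (Gd.mul (γs j n) α) (Gd.inv α) (Gd.inv (γs i n)) hc1 hc2,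
        Gd.mul_assoc' (γs j n) α (Gd.inv α) hcompj hc3, Gd.mul_inv' α, ← hcompj,
        Gd.mul_unit]
    apply hn2 i j hij
    rw [hid]
    refine ⟨(Gd.mul (γs j n) α, Gd.inv (Gd.mul (γs i n) α)), ⟨?_, hFj, ?_⟩, rfl⟩
    · show Gd.s _ = Gd.r _
      rw [Gd.s_mul _ _ hcompj, Gd.r_inv, Gd.s_mul _ _ hcompi]
    · exact ⟨Gd.mul (γs i n) α, hFi, rfl⟩
  have hdisjP : Set.PairwiseDisjoint ((Finset.univ : Finset (Fin k)) : Set (Fin k)) A := by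
    intro i _ j _ hne
    rw [Function.onFun, Set.disjoint_left]
    intro α hi hj
    rcases lt_or_gt_of_ne hne with h | h
    · exact hkey i j h α hi hj
    · exact hkey j i h α hj hi
  have hsum := measure_biUnion_finset (μ := HS.lam z) hdisjP
    (fun i _ => (hAclosed i).measurableSet)
  have hUnionT : (⋃ i ∈ (Finset.univ : Finset (Fin k)), A i) ⊆ T :=
    Set.iUnion₂_subset fun i _ => hAT i
  calc (k : ℝ≥0∞) * ENNReal.ofReal (c / 2)
      = (Finset.univ : Finset (Fin k)).card • ENNReal.ofReal (c / 2) := by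
        simp [nsmul_eq_mul]
    _ ≤ ∑ i : Fin k, HS.lam z (A i) :=
        Finset.card_nsmul_le_sum _ _ _ (fun i _ => hA_lb i)
    _ = HS.lam z (⋃ i ∈ (Finset.univ : Finset (Fin k)), A i) := hsum.symm
    _ ≤ HS.lam z T := measure_mono hUnionT
end

section
/- Let G be a second countable locally compact Hausdorff principal groupoid with left Haar system. If G is integrable then all orbits of G are closed in G⁰. -/
open MeasureTheory Filter Topology ENNReal Classical

section Aux

namespace TopGroupoid

variable {G : Type*} [TopologicalSpace G] (Gd : TopGroupoid G)

lemma r_of_unit {x : G} (hx : x ∈ Gd.units) : Gd.r x = x := by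
  obtain ⟨γ, rfl⟩ := hx
  calc Gd.r (Gd.r γ) = Gd.r (Gd.mul γ (Gd.inv γ)) := by rw [Gd.mul_inv']
    _ = Gd.r γ := Gd.r_mul _ _ (Gd.r_inv γ).symm

lemma s_of_unit {x : G} (hx : x ∈ Gd.units) : Gd.s x = x := by
  obtain ⟨γ, rfl⟩ := hx
  calc Gd.s (Gd.r γ) = Gd.s (Gd.mul γ (Gd.inv γ)) := by rw [Gd.mul_inv']
    _ = Gd.s (Gd.inv γ) := Gd.s_mul _ _ (Gd.r_inv γ).symm
    _ = Gd.r γ := Gd.s_inv γ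

lemma s_mem_units (γ : G) : Gd.s γ ∈ Gd.units := ⟨Gd.inv γ, Gd.r_inv γ⟩

lemma mul_inv_cancel_left' {γ β : G} (h : Gd.r γ = Gd.r β) :
    Gd.mul γ (Gd.mul (Gd.inv γ) β) = β := by
  rw [← Gd.mul_assoc' γ (Gd.inv γ) β (Gd.r_inv γ).symm (by rw [Gd.s_inv]; exact h),
    Gd.mul_inv', h, Gd.unit_mul]

lemma inv_mul_cancel_left' {γ α : G} (h : Gd.s γ = Gd.r α) :
    Gd.mul (Gd.inv γ) (Gd.mul γ α) = α := by
  rw [← Gd.mul_assoc' (Gd.inv γ) γ α (Gd.s_inv γ) h, Gd.inv_mul', h, Gd.unit_mul]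

lemma continuousOn_lmul (γ : G) :
    ContinuousOn (fun β => Gd.mul γ β) {β | Gd.s γ = Gd.r β} := by
  have : (fun β => Gd.mul γ β) = (fun p : G × G => Gd.mul p.1 p.2) ∘ (fun β => (γ, β)) := rfl
  rw [this]
  exact Gd.continuous_mul.comp (Continuous.continuousOn (by fun_prop))
    (fun β hβ => hβ)

lemma isCompact_setMul [T2Space G] {A B : Set G} (hA : IsCompact A) (hB : IsCompact B) :
    IsCompact (Gd.setMul A B) := by
  have h1 : Gd.setMul A B =
      (fun p : G × G => Gd.mul p.1 p.2) '' ((A ×ˢ B) ∩ {p | Gd.s p.1 = Gd.r p.2}) := by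
    ext x
    constructor
    · rintro ⟨γ, hγ, α, hα, hc, rfl⟩; exact ⟨(γ, α), ⟨⟨hγ, hα⟩, hc⟩, rfl⟩
    · rintro ⟨⟨γ, α⟩, ⟨⟨hγ, hα⟩, hc⟩, rfl⟩; exact ⟨γ, hγ, α, hα, hc, rfl⟩
  rw [h1]
  refine IsCompact.image_of_continuousOn ?_ (Gd.continuous_mul.mono Set.inter_subset_right)
  exact (hA.prod hB).inter_right
    (isClosed_eq (Gd.continuous_s.comp continuous_fst) (Gd.continuous_r.comp continuous_snd))

end TopGroupoid

end Aux

/-- if `G` is integrable then all orbits are closed in `G⁰`. -/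
theorem stmt19 {G : Type*} [TopologicalSpace G] [T2Space G] [LocallyCompactSpace G]
    [SecondCountableTopology G] [MeasurableSpace G] [BorelSpace G]
    (Gd : TopGroupoid G) (HS : HaarSystem Gd) (hpr : Gd.Principal)
    (hint : HS.Integrable) :
    ∀ z ∈ Gd.units, closure (Gd.orbit z) ∩ Gd.units = Gd.orbit z := by
  intro z hz
  refine Set.Subset.antisymm ?_ (Set.subset_inter subset_closure ?_)
  swap
  · rintro x ⟨g, -, rfl⟩; exact ⟨g, rfl⟩
  rintro y ⟨hyc, hyu⟩
  by_contra hy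
  -- a sequence in the orbit converging to y
  obtain ⟨u, hu_mem, hu_lim⟩ := mem_closure_iff_seq_limit.mp hyc
  have hu' : ∀ n, ∃ g, Gd.s g = z ∧ Gd.r g = u n := by
    intro n
    obtain ⟨g, hg1, hg2⟩ := hu_mem n
    exact ⟨g, hg1, hg2⟩
  choose γ hγs hγr using hu'
  -- Urysohn bump at y
  obtain ⟨f, hf1, -, hfc, hf01⟩ :=
    exists_continuous_one_zero_of_isCompact (isCompact_singleton : IsCompact {y}) isClosed_empty
      (Set.disjoint_empty _)
  set F : G → ℝ := fun w => ∫ α, f α ∂ HS.lam w with hF_def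
  have hF_cont : Continuous F := HS.continuous_int f f.continuous hfc
  set K : Set G := tsupport f with hK_def
  have hK_comp : IsCompact K := hfc
  -- ε := F y > 0
  haveI := HS.regular y
  obtain ⟨L, hL_comp, hL_nhds⟩ := exists_compact_mem_nhds y
  set V : Set G := interior L ∩ {α | 1/2 < f α} with hV_def
  have hV_open : IsOpen V := isOpen_interior.inter (isOpen_lt continuous_const f.continuous)
  have hfy : f y = 1 := hf1 rfl
  have hyV : y ∈ V := ⟨mem_interior_iff_mem_nhds.mpr hL_nhds, by
    simp only [Set.mem_setOf_eq, hfy]; norm_num⟩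
  have hVpos : 0 < HS.lam y V := by
    refine HS.supp_full y hyu V hV_open ⟨y, hyV, ?_⟩
    simp [Gd.r_of_unit hyu]
  have hVfin : HS.lam y V < ⊤ :=
    lt_of_le_of_lt (measure_mono (Set.inter_subset_left.trans interior_subset))
      hL_comp.measure_lt_top
  have hVmeas : MeasurableSet V := hV_open.measurableSet
  have hf_int : MeasureTheory.Integrable (⇑f) (HS.lam y) :=
    f.continuous.integrable_of_hasCompactSupport hfc
  have hind_int : MeasureTheory.Integrable (V.indicator fun _ => (1/2 : ℝ)) (HS.lam y) := by
    rw [MeasureTheory.integrable_indicator_iff hVmeas]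
    exact MeasureTheory.integrableOn_const hVfin.ne
  have hε : 0 < F y := by
    have hle : V.indicator (fun _ => (1/2:ℝ)) ≤ ⇑f := by
      intro x
      by_cases hx : x ∈ V
      · simp only [Set.indicator_of_mem hx]; exact le_of_lt hx.2
      · simp only [Set.indicator_of_notMem hx]; exact (hf01 x).1
    have h1 : ∫ α, V.indicator (fun _ => (1/2:ℝ)) α ∂ HS.lam y ≤ F y :=
      MeasureTheory.integral_mono hind_int hf_int hle
    have h2 : ∫ α, V.indicator (fun _ => (1/2:ℝ)) α ∂ HS.lam y
        = (HS.lam y V).toReal • (1/2 : ℝ) :=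
      MeasureTheory.integral_indicator_const _ hVmeas
    have h3 : 0 < (HS.lam y V).toReal := ENNReal.toReal_pos hVpos.ne' hVfin.ne
    rw [h2] at h1
    have : 0 < (HS.lam y V).toReal • (1/2 : ℝ) := by
      rw [smul_eq_mul]; positivity
    linarith
  set U₀ : Set G := {w | F y / 2 < F w} with hU₀_def
  have hU₀_open : IsOpen U₀ := isOpen_lt continuous_const hF_cont
  have hyU₀ : y ∈ U₀ := by simp only [hU₀_def, Set.mem_setOf_eq]; linarith
  -- the compact set C = K * K⁻¹
  set C : Set G := Gd.setMul K (Gd.inv '' K) with hC_def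
  have hC_comp : IsCompact C := Gd.isCompact_setMul hK_comp (hK_comp.image Gd.continuous_inv)
  -- eventually escaping C
  have hB : ∀ q : ℕ, ∀ᶠ m in atTop, Gd.mul (γ m) (Gd.inv (γ q)) ∉ C := by
    intro q
    by_contra hcon
    rw [Filter.not_eventually] at hcon
    have hcon' : ∃ᶠ m in atTop, Gd.mul (γ m) (Gd.inv (γ q)) ∈ C := by
      simpa using hcon
    obtain ⟨δ, hδC, φ, hφ, hconv⟩ := hC_comp.tendsto_subseq' hcon'
    have hcomp : ∀ m, Gd.s (γ m) = Gd.r (Gd.inv (γ q)) := fun m => by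
      rw [Gd.r_inv, hγs, hγs]
    have hrδ : Gd.r δ = y := by
      have h1 := (Gd.continuous_r.tendsto δ).comp hconv
      have h2 : Gd.r ∘ ((fun m => Gd.mul (γ m) (Gd.inv (γ q))) ∘ φ) = fun t => u (φ t) := by
        funext t
        simp only [Function.comp_apply]
        rw [Gd.r_mul _ _ (hcomp _), hγr]
      rw [h2] at h1
      exact tendsto_nhds_unique h1 (hu_lim.comp hφ.tendsto_atTop)
    have hsδ : Gd.s δ = u q := by
      have h1 := (Gd.continuous_s.tendsto δ).comp hconv
      have h2 : Gd.s ∘ ((fun m => Gd.mul (γ m) (Gd.inv (γ q))) ∘ φ) = fun _ => u q := by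
        funext t
        simp only [Function.comp_apply]
        rw [Gd.s_mul _ _ (hcomp _), Gd.s_inv, hγr]
      rw [h2] at h1
      exact tendsto_nhds_unique h1 tendsto_const_nhds
    have hcomp2 : Gd.s δ = Gd.r (γ q) := by rw [hsδ, hγr]
    apply hy
    refine ⟨Gd.mul δ (γ q), ?_, ?_⟩
    · show Gd.s (Gd.mul δ (γ q)) ∈ ({z} : Set G)
      rw [Set.mem_singleton_iff, Gd.s_mul _ _ hcomp2, hγs]
    · rw [Gd.r_mul _ _ hcomp2, hrδ]
  -- choose k indices with all pairwise products outside C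
  have hC3 : ∀ k : ℕ, ∃ ms : Fin k → ℕ, (∀ i, u (ms i) ∈ U₀) ∧
      (∀ i j : Fin k, i < j → Gd.mul (γ (ms j)) (Gd.inv (γ (ms i))) ∉ C) := by
    intro k
    induction k with
    | zero => exact ⟨Fin.elim0, fun i => i.elim0, fun i => i.elim0⟩
    | succ k ih =>
      obtain ⟨ms, hms1, hms2⟩ := ih
      have hev : ∀ᶠ m in atTop,
          (u m ∈ U₀ ∧ ∀ i : Fin k, Gd.mul (γ m) (Gd.inv (γ (ms i))) ∉ C) :=
        (hu_lim.eventually (hU₀_open.mem_nhds hyU₀)).and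
          (Filter.eventually_all.mpr fun i => hB (ms i))
      obtain ⟨m, hm1, hm2⟩ := hev.exists
      refine ⟨Fin.snoc ms m, ?_, ?_⟩
      · intro i
        induction i using Fin.lastCases with
        | last => simpa using hm1
        | cast i => simpa using hms1 i
      · intro i j hij
        induction j using Fin.lastCases with
        | last =>
          obtain ⟨i', rfl⟩ := Fin.exists_castSucc_eq.mpr (ne_of_lt hij)
          simpa using hm2 i'
        | cast j' =>
          have hine : i ≠ Fin.last k := ne_of_lt (lt_of_lt_of_le hij (Fin.le_last _))
          obtain ⟨i', rfl⟩ := Fin.exists_castSucc_eq.mpr hine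
          simp only [Fin.snoc_castSucc]
          exact hms2 i' j' ((Fin.castSucc_lt_castSucc_iff).mp hij)
  -- the compact target set M
  set M : Set G := Gd.s '' K with hM_def
  have hM_comp : IsCompact M := hK_comp.image Gd.continuous_s
  have hM_units : M ⊆ Gd.units := by rintro x ⟨α, -, rfl⟩; exact Gd.s_mem_units α
  -- the key estimate
  have key : ∀ k : ℕ, (k : ℝ≥0∞) * ENNReal.ofReal (F y / 2) ≤ HS.lam z (Gd.s ⁻¹' M) := by
    intro k
    obtain ⟨ms, hms1, hms2⟩ := hC3 k
    set E : Fin k → Set G := fun i =>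
      (fun β => Gd.mul (Gd.inv (γ (ms i))) β) '' (K ∩ Gd.r ⁻¹' {u (ms i)}) with hE_def
    have hE_comp : ∀ i, IsCompact (E i) := by
      intro i
      refine IsCompact.image_of_continuousOn
        (hK_comp.inter_right (IsClosed.preimage Gd.continuous_r isClosed_singleton)) ?_
      refine (Gd.continuousOn_lmul (Gd.inv (γ (ms i)))).mono ?_
      rintro β ⟨-, hβ⟩
      have hβ' : Gd.r β = u (ms i) := hβ
      show Gd.s (Gd.inv (γ (ms i))) = Gd.r β
      rw [Gd.s_inv, hγr, hβ']
    have hE_sub : ∀ i, E i ⊆ Gd.s ⁻¹' M := by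
      rintro i x ⟨β, ⟨hβK, hβr⟩, rfl⟩
      have hβr' : Gd.r β = u (ms i) := hβr
      have hcomp : Gd.s (Gd.inv (γ (ms i))) = Gd.r β := by rw [Gd.s_inv, hγr, hβr']
      show Gd.s (Gd.mul (Gd.inv (γ (ms i))) β) ∈ M
      rw [Gd.s_mul _ _ hcomp]
      exact ⟨β, hβK, rfl⟩
    have hE_lb : ∀ i, ENNReal.ofReal (F y / 2) ≤ HS.lam z (E i) := by
      intro i
      have hεlt : F y / 2 < F (u (ms i)) := hms1 i
      have hinv : ∫ α, f (Gd.mul (γ (ms i)) α) ∂ HS.lam z = F (u (ms i)) := by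
        have h := HS.left_invariant (γ (ms i)) f f.continuous hfc
        rw [hγs, hγr] at h
        exact h
      have hle : ENNReal.ofReal (∫ α, f (Gd.mul (γ (ms i)) α) ∂ HS.lam z)
          ≤ HS.lam z (E i ∪ {α | Gd.r α ≠ z}) := by
        apply MeasureTheory.integral_le_measure
        · intro x _
          exact (hf01 _).2
        · intro x hx
          simp only [Set.mem_compl_iff, Set.mem_union, Set.mem_setOf_eq, not_or, not_not] at hx
          obtain ⟨hxE, hxz⟩ := hx
          by_contra hpos
          push_neg at hpos
          have hne : f (Gd.mul (γ (ms i)) x) ≠ 0 := ne_of_gt hpos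
          have hmem : Gd.mul (γ (ms i)) x ∈ K := subset_tsupport _ hne
          apply hxE
          have hcomp : Gd.s (γ (ms i)) = Gd.r x := by rw [hγs, hxz]
          refine ⟨Gd.mul (γ (ms i)) x, ⟨hmem, ?_⟩, Gd.inv_mul_cancel_left' hcomp⟩
          show Gd.r (Gd.mul (γ (ms i)) x) ∈ ({u (ms i)} : Set G)
          rw [Set.mem_singleton_iff, Gd.r_mul _ _ hcomp, hγr]
      have h0 : HS.lam z {α | Gd.r α ≠ z} = 0 := HS.supp_subset z hz
      calc ENNReal.ofReal (F y / 2) ≤ ENNReal.ofReal (F (u (ms i))) :=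
            ENNReal.ofReal_le_ofReal (le_of_lt hεlt)
        _ = ENNReal.ofReal (∫ α, f (Gd.mul (γ (ms i)) α) ∂ HS.lam z) := by rw [hinv]
        _ ≤ HS.lam z (E i ∪ {α | Gd.r α ≠ z}) := hle
        _ ≤ HS.lam z (E i) + HS.lam z {α | Gd.r α ≠ z} := measure_union_le _ _
        _ = HS.lam z (E i) := by rw [h0, add_zero]
    have hmain : ∀ i j : Fin k, i < j → ∀ x, x ∈ E i → x ∈ E j → False := by
      rintro i j hij x ⟨β, ⟨hβK, hβr⟩, rfl⟩ ⟨β', ⟨hβ'K, hβ'r⟩, heq⟩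
      have hβr' : Gd.r β = u (ms i) := hβr
      have hβ'r' : Gd.r β' = u (ms j) := hβ'r
      set Γi := γ (ms i) with hΓi
      set Γj := γ (ms j) with hΓj
      set δ := Gd.mul Γj (Gd.inv Γi) with hδ
      have heq' : Gd.mul (Gd.inv Γj) β' = Gd.mul (Gd.inv Γi) β := heq
      have h1 : β' = Gd.mul δ β := by
        have e1 : Gd.mul Γj (Gd.mul (Gd.inv Γj) β') = β' :=
          Gd.mul_inv_cancel_left' (by rw [hγr, hβ'r'])
        have e2 : Gd.mul Γj (Gd.mul (Gd.inv Γi) β) = Gd.mul δ β := by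
          rw [hδ]
          exact (Gd.mul_assoc' Γj (Gd.inv Γi) β (by rw [Gd.r_inv, hγs, hγs])
            (by rw [Gd.s_inv, hγr, hβr'])).symm
        rw [← e1, heq', e2]
      have hsδ : Gd.s δ = Gd.r β := by
        rw [hδ, Gd.s_mul _ _ (by rw [Gd.r_inv, hγs, hγs]), Gd.s_inv, hγr, hβr']
      have h2 : δ = Gd.mul β' (Gd.inv β) := by
        rw [h1, Gd.mul_assoc' δ β (Gd.inv β) hsδ (Gd.r_inv β).symm, Gd.mul_inv', ← hsδ,
          Gd.mul_unit]
      apply hms2 i j hij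
      show δ ∈ C
      refine ⟨β', hβ'K, Gd.inv β, ⟨β, hβK, rfl⟩, ?_, h2⟩
      rw [Gd.r_inv, h1, Gd.s_mul _ _ hsδ]
    have hdisj : Pairwise (Function.onFun Disjoint E) := by
      intro i j hne
      rcases hne.lt_or_gt with h | h
      · exact Set.disjoint_left.mpr fun x hi hj => hmain i j h x hi hj
      · exact Set.disjoint_left.mpr fun x hi hj => hmain j i h x hj hi
    have hEmeas : ∀ i, MeasurableSet (E i) := fun i => (hE_comp i).isClosed.measurableSet
    calc (k : ℝ≥0∞) * ENNReal.ofReal (F y / 2)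
        = ∑ _i : Fin k, ENNReal.ofReal (F y / 2) := by
          simp [Finset.sum_const, Finset.card_univ, nsmul_eq_mul]
      _ ≤ ∑ i : Fin k, HS.lam z (E i) := Finset.sum_le_sum fun i _ => hE_lb i
      _ = ∑' i : Fin k, HS.lam z (E i) := (tsum_fintype _).symm
      _ = HS.lam z (⋃ i, E i) := (MeasureTheory.measure_iUnion hdisj hEmeas).symm
      _ ≤ HS.lam z (Gd.s ⁻¹' M) := measure_mono (Set.iUnion_subset hE_sub)
  -- conclude λ^z (s⁻¹ M) = ∞
  have hinf : HS.lam z (Gd.s ⁻¹' M) = ⊤ := by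
    by_contra hne
    have hc0 : ENNReal.ofReal (F y / 2) ≠ 0 := by
      simp only [ne_eq, ENNReal.ofReal_eq_zero, not_le]
      linarith
    have hcT : ENNReal.ofReal (F y / 2) ≠ ⊤ := ENNReal.ofReal_ne_top
    have hdivT : HS.lam z (Gd.s ⁻¹' M) / ENNReal.ofReal (F y / 2) ≠ ⊤ :=
      (ENNReal.div_lt_top hne hc0).ne
    obtain ⟨n, hn⟩ := ENNReal.exists_nat_gt hdivT
    have h2 : (n : ℝ≥0∞) ≤ HS.lam z (Gd.s ⁻¹' M) / ENNReal.ofReal (F y / 2) :=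
      (ENNReal.le_div_iff_mul_le (Or.inl hc0) (Or.inl hcT)).mpr (key n)
    exact absurd h2 (not_le.mpr hn)
  -- contradiction with integrability
  have hN := hint (insert z M) (Set.insert_subset hz hM_units) (hM_comp.insert z)
  have htop : HS.lam z (Gd.s ⁻¹' (insert z M)) = ⊤ :=
    top_le_iff.mp (hinf ▸ measure_mono (Set.preimage_mono (Set.subset_insert _ _)))
  have hle2 : HS.lam z (Gd.s ⁻¹' (insert z M))
      ≤ ⨆ x ∈ insert z M, HS.lam x (Gd.s ⁻¹' (insert z M)) :=
    le_biSup (f := fun x => HS.lam x (Gd.s ⁻¹' (insert z M))) (Set.mem_insert z M)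
  rw [htop] at hle2
  exact absurd (lt_of_le_of_lt hle2 hN) (lt_irrefl _)
end
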